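/- Let 1 < p < ∞, α ∈ ℝ, and ψ_{p,α}(u) = u^{-1/p} ln^{-α}(e/u) on (0,1]. Then there exist constants c, C, v₀ > 0 such that for all v > v₀, the distribution function n_{ψ_{p,α}}(v) = μ{u ∈ (0,1] : ψ_{p,α}(u) > v} satisfies c·v^{-p}ln^{-pα}(v) ≤ n_{ψ_{p,α}}(v) ≤ C·v^{-p}ln^{-pα}(v). -/

import Mathlib

open MeasureTheory Set Filter ENNReal

/-- Lebesgue measure restricted to `[0,1]`. -/
noncomputable def muI : Measure ℝ := volume.restrict (Set.Icc (0:ℝ) 1)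

/-- Lebesgue measure on the square `[0,1]²`. -/
noncomputable def muI2 : Measure (ℝ × ℝ) := muI.prod muI

/-- Distribution function `n_f(τ) = μ{w : |f w| > τ}`. -/
noncomputable def distrib {α : Type*} [MeasurableSpace α] (μ : Measure α) (f : α → ℝ)
    (τ : ℝ) : ℝ≥0∞ :=
  μ {w | τ < |f w|}

/-- Non-increasing rearrangement of `f` with respect to `μ`. -/
noncomputable def rearr {α : Type*} [MeasurableSpace α] (μ : Measure α) (f : α → ℝ)
    (t : ℝ) : ℝ :=
  sInf {τ : ℝ | 0 ≤ τ ∧ distrib μ f τ ≤ ENNReal.ofReal t}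

/-- Tensor product `(x ⊗ y)(s,t) = x s * y t`. -/
def tensor (x y : ℝ → ℝ) : ℝ × ℝ → ℝ := fun p => x p.1 * y p.2

/-- Dilation operator `σ_t x (u) = x(u/t) χ_{[0,1]}(u/t)`. -/
noncomputable def dil (t : ℝ) (x : ℝ → ℝ) : ℝ → ℝ :=
  fun u => x (u / t) * (Set.Icc (0:ℝ) 1).indicator (fun _ => (1:ℝ)) (u / t)

/-- `ψ_{p,α}(u) = u^{-1/p} ln^{-α}(e/u)` on `(0,1]`, extended by `0`. -/
noncomputable def psiPA (p α : ℝ) : ℝ → ℝ := fun u =>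
  if u ∈ Set.Ioc (0:ℝ) 1 then u ^ (-(1/p)) * Real.log (Real.exp 1 / u) ^ (-α) else 0

private lemma psiPA_pos {p α u : ℝ} (hu : u ∈ Set.Ioc (0:ℝ) 1) : 0 < psiPA p α u := by
  have h1 : (0:ℝ) < 1 - Real.log u := by
    have := Real.log_nonpos hu.1.le hu.2; linarith
  have hlog : Real.log (Real.exp 1 / u) = 1 - Real.log u := by
    rw [Real.log_div (Real.exp_ne_zero 1) (ne_of_gt hu.1), Real.log_exp]
  rw [psiPA]
  simp only [if_pos hu, hlog]
  exact mul_pos (Real.rpow_pos_of_pos hu.1 _) (Real.rpow_pos_of_pos h1 _)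

private lemma psiPA_gt_iff {p α v u : ℝ} (hp : 0 < p) (hv : 0 < v) (hu : u ∈ Set.Ioc (0:ℝ) 1) :
    v < psiPA p α u ↔
      p * Real.log v < -Real.log u - p * α * Real.log (1 - Real.log u) := by
  have h1 : (0:ℝ) < 1 - Real.log u := by
    have := Real.log_nonpos hu.1.le hu.2; linarith
  have hψ : 0 < psiPA p α u := psiPA_pos hu
  have hlog : Real.log (Real.exp 1 / u) = 1 - Real.log u := by
    rw [Real.log_div (Real.exp_ne_zero 1) (ne_of_gt hu.1), Real.log_exp]
  have hp' : p ≠ 0 := ne_of_gt hp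
  have key : p * Real.log (psiPA p α u) = -Real.log u - p * α * Real.log (1 - Real.log u) := by
    rw [psiPA]
    simp only [if_pos hu, hlog]
    rw [Real.log_mul (ne_of_gt (Real.rpow_pos_of_pos hu.1 _))
      (ne_of_gt (Real.rpow_pos_of_pos h1 _)), Real.log_rpow hu.1, Real.log_rpow h1]
    field_simp
    ring
  rw [← Real.log_lt_log_iff hv hψ, ← mul_lt_mul_iff_of_pos_left hp, key]

private lemma upper_s {p α L s lC : ℝ} (hp : 1 < p) (hL : 1 ≤ L) (hs : 0 ≤ s)
    (hlC : p * |α| * Real.log (2*p) ≤ lC)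
    (h : p * L < s - p * α * Real.log (1 + s)) :
    p * L + p * α * Real.log L - lC ≤ s := by
  have hp0 : 0 < p := lt_trans one_pos hp
  have h2p : (1:ℝ) < 2 * p := by linarith
  have hlog2p : 0 ≤ Real.log (2*p) := Real.log_nonneg h2p.le
  have hlogL : 0 ≤ Real.log L := Real.log_nonneg hL
  have hlCnn : 0 ≤ lC := le_trans (by positivity) hlC
  rcases le_or_gt α 0 with hα | hα
  · have habs : |α| = -α := abs_of_nonpos hα
    have hpα : p * α ≤ 0 := mul_nonpos_iff.mpr (Or.inl ⟨hp0.le, hα⟩)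
    rcases le_or_gt (p * L) s with h1 | h1
    · have : p * α * Real.log L ≤ 0 := mul_nonpos_iff.mpr (Or.inr ⟨hpα, hlogL⟩)
      linarith
    · have h1s : 1 + s ≤ 2 * p * L := by nlinarith
      have hls : Real.log (1 + s) ≤ Real.log (2*p) + Real.log L := by
        calc Real.log (1+s) ≤ Real.log (2*p*L) := Real.log_le_log (by linarith) h1s
          _ = Real.log (2*p) + Real.log L := Real.log_mul (by linarith) (by linarith)
      have f1 : p * α * (Real.log (2*p) + Real.log L) ≤ p * α * Real.log (1+s) :=
        mul_le_mul_of_nonpos_left hls hpα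
      rw [habs] at hlC
      linarith
  · have habs : |α| = α := abs_of_pos hα
    have hpα : 0 ≤ p * α := by positivity
    have h0 : 0 ≤ Real.log (1 + s) := Real.log_nonneg (by linarith)
    have hsL : p * L ≤ s := by nlinarith
    have hmono : Real.log L ≤ Real.log (1 + s) := Real.log_le_log (by linarith) (by nlinarith)
    have f1 : p * α * Real.log L ≤ p * α * Real.log (1+s) :=
      mul_le_mul_of_nonneg_left hmono hpα
    linarith

private lemma lower_s {p α L lc : ℝ} (hp : 1 < p) (hL : 1 ≤ L)
    (h2 : p * |α| * Real.log L ≤ (p - 1) * L)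
    (h3 : ∀ s : ℝ, 2 * p * L ≤ s → p * α * Real.log (1 + s) < s / 2)
    (hlc : lc ≤ -(p * |α|) * Real.log (3*p) - Real.log 2)
    {s : ℝ}
    (hs : p * L + p * α * Real.log L - lc ≤ s) :
    p * L < s - p * α * Real.log (1 + s) := by
  have hp0 : 0 < p := lt_trans one_pos hp
  have h3p : (1:ℝ) < 3 * p := by linarith
  have hlog3p : 0 ≤ Real.log (3*p) := Real.log_nonneg h3p.le
  have hlog2 : 0 < Real.log 2 := Real.log_pos one_lt_two
  have hlogL : 0 ≤ Real.log L := Real.log_nonneg hL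
  have habsK : 0 ≤ p * |α| := by positivity
  have hK3p : 0 ≤ p * |α| * Real.log (3*p) := by positivity
  have hlcneg : lc ≤ 0 := by linarith
  have hKL : -((p-1) * L) ≤ p * α * Real.log L := by
    have h1 : -(p * |α|) * Real.log L ≤ p * α * Real.log L := by
      have hsum : 0 ≤ α + |α| := by linarith [neg_abs_le α]
      nlinarith [mul_nonneg (mul_nonneg hp0.le hsum) hlogL]
    linarith [h2, h1]
  have hTL : L ≤ s := by linarith
  rcases le_or_gt α 0 with hα | hα
  · have hpα : p * α ≤ 0 := mul_nonpos_iff.mpr (Or.inl ⟨hp0.le, hα⟩)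
    have hT1 : Real.log L ≤ Real.log (1 + s) := Real.log_le_log (by linarith) (by linarith)
    have key : p * α * Real.log (1+s) ≤ p * α * Real.log L :=
      mul_le_mul_of_nonpos_left hT1 hpα
    have habs : |α| = -α := abs_of_nonpos hα
    rw [habs] at hlc
    have f2 : p * α * Real.log (3*p) ≤ 0 :=
      mul_nonpos_iff.mpr (Or.inr ⟨hpα, hlog3p⟩)
    nlinarith [key, hs, hlog2, f2, hlc]
  · have hpα : 0 < p * α := mul_pos hp0 hα
    have habs : |α| = α := abs_of_pos hα
    rw [habs] at hlc
    rcases le_or_gt s (2*p*L) with hcase | hcase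
    · have h1s : Real.log (1+s) ≤ Real.log (3*p) + Real.log L := by
        have hb : 1 + s ≤ 3*p*L := by nlinarith
        calc Real.log (1+s) ≤ Real.log (3*p*L) := Real.log_le_log (by linarith) hb
          _ = Real.log (3*p) + Real.log L := Real.log_mul (by linarith) (by linarith)
      have f1 : p*α*Real.log (1+s) ≤ p*α*(Real.log (3*p) + Real.log L) :=
        mul_le_mul_of_nonneg_left h1s hpα.le
      nlinarith [hlog2, f1, hs, hlc]
    · have := h3 s (le_of_lt hcase)
      linarith

theorem distrib_psiPA_equiv (p α : ℝ) (hp : 1 < p) :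
    ∃ c C v₀ : ℝ, 0 < c ∧ 0 < C ∧ 0 < v₀ ∧ ∀ v : ℝ, v₀ < v →
      ENNReal.ofReal (c * (v ^ (-p) * Real.log v ^ (-(p * α)))) ≤
        distrib muI (psiPA p α) v ∧
      distrib muI (psiPA p α) v ≤
        ENNReal.ofReal (C * (v ^ (-p) * Real.log v ^ (-(p * α)))) := by
  have hp0 : 0 < p := lt_trans one_pos hp
  have h2p1 : (0:ℝ) < 2*p := by linarith
  have h3p1 : (0:ℝ) < 3*p := by linarith
  set C := (2*p) ^ (p*|α|) with hCdef
  set c := (3*p) ^ (-(p*|α|)) / 2 with hcdef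
  have hCpos : 0 < C := Real.rpow_pos_of_pos h2p1 _
  have hcpos : 0 < c := by
    have := Real.rpow_pos_of_pos h3p1 (-(p*|α|))
    rw [hcdef]; linarith
  have hlogC : Real.log C = p * |α| * Real.log (2*p) := Real.log_rpow h2p1 _
  have hlogc : Real.log c = -(p*|α|) * Real.log (3*p) - Real.log 2 := by
    rw [hcdef, Real.log_div (ne_of_gt (Real.rpow_pos_of_pos h3p1 _)) two_ne_zero,
      Real.log_rpow h3p1]
  -- eventual facts in L
  have ev2 : ∀ᶠ L in atTop, p*|α| * Real.log L ≤ (p-1)*L := by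
    have h := Real.isLittleO_log_id_atTop.const_mul_left (p*|α|)
    filter_upwards [h.def (by linarith : (0:ℝ) < p-1), eventually_ge_atTop (1:ℝ)] with L hb hL1
    have hL0 : (0:ℝ) < L := by linarith
    have hlogL : 0 ≤ Real.log L := Real.log_nonneg hL1
    simp only [Real.norm_eq_abs, id_eq, abs_mul, abs_abs] at hb
    rw [abs_of_pos hp0, abs_of_nonneg hlogL, abs_of_pos hL0] at hb
    exact hb
  have ev3 : ∀ᶠ L in atTop, ∀ s : ℝ, 2*p*L ≤ s → p*α*Real.log (1+s) < s/2 := by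
    have h1 : (fun s : ℝ => Real.log (1+s)) =o[atTop] (fun s : ℝ => 1 + s) := by
      simpa [Function.comp_def] using
        Real.isLittleO_log_id_atTop.comp_tendsto
          (tendsto_atTop_add_const_left atTop 1 tendsto_id)
    have h2 : (fun s : ℝ => (1:ℝ)+s) =O[atTop] (id : ℝ → ℝ) := by
      apply Asymptotics.IsBigO.of_bound 2
      filter_upwards [eventually_ge_atTop (1:ℝ)] with s hs
      simp only [Real.norm_eq_abs, id_eq]
      rw [abs_of_pos (show (0:ℝ) < 1 + s by linarith), abs_of_pos (show (0:ℝ) < s by linarith)]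
      linarith
    have h4 := ((h1.trans_isBigO h2).const_mul_left (p*α)).def (by norm_num : (0:ℝ) < 1/4)
    rw [Filter.eventually_atTop] at h4
    obtain ⟨s₀, hs₀⟩ := h4
    filter_upwards [eventually_ge_atTop (max s₀ 1)] with L hL s hs
    have hL1 : (1:ℝ) ≤ L := le_trans (le_max_right s₀ 1) hL
    have hLs : L ≤ 2*p*L := by nlinarith
    have hss : max s₀ 1 ≤ s := le_trans hL (le_trans hLs hs)
    have hb := hs₀ s (le_trans (le_max_left _ _) hss)
    have hs1 : (1:ℝ) ≤ s := le_trans (le_max_right _ _) hss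
    have habs := hb
    simp only [Real.norm_eq_abs, id_eq, abs_mul, abs_abs] at habs
    rw [abs_of_pos (show (0:ℝ) < s by linarith)] at habs
    have h5 : p*α*Real.log (1+s) ≤ abs p * abs α * abs (Real.log (1+s)) := by
      calc p*α*Real.log (1+s) ≤ abs (p*α*Real.log (1+s)) := le_abs_self _
        _ = abs p * abs α * abs (Real.log (1+s)) := by rw [abs_mul, abs_mul]
    linarith [h5, habs]
  have evL := (ev2.and ev3).and (eventually_ge_atTop (1:ℝ))
  have evv := Real.tendsto_log_atTop.eventually evL
  rw [Filter.eventually_atTop] at evv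
  obtain ⟨w, hw⟩ := evv
  refine ⟨c, C, max w 1, hcpos, hCpos, lt_of_lt_of_le one_pos (le_max_right _ _), ?_⟩
  intro v hv
  have hv1 : 1 < v := lt_of_le_of_lt (le_max_right w 1) hv
  have hv0 : 0 < v := lt_trans one_pos hv1
  obtain ⟨⟨h2, h3⟩, hL1⟩ := hw v (le_of_lt (lt_of_le_of_lt (le_max_left w 1) hv))
  have hL0 : 0 < Real.log v := by linarith
  have hvp : 0 < v ^ (-p) := Real.rpow_pos_of_pos hv0 (-p)
  have hLp : 0 < Real.log v ^ (-(p*α)) := Real.rpow_pos_of_pos hL0 (-(p*α))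
  set a := c * (v ^ (-p) * Real.log v ^ (-(p * α))) with hadef
  set b := C * (v ^ (-p) * Real.log v ^ (-(p * α))) with hbdef
  have hapos : 0 < a := by rw [hadef]; exact mul_pos hcpos (mul_pos hvp hLp)
  have hbpos : 0 < b := by rw [hbdef]; exact mul_pos hCpos (mul_pos hvp hLp)
  have hloga : Real.log a =
      Real.log c + (-p * Real.log v + -(p*α) * Real.log (Real.log v)) := by
    rw [hadef, Real.log_mul (ne_of_gt hcpos) (ne_of_gt (mul_pos hvp hLp)),
      Real.log_mul (ne_of_gt hvp) (ne_of_gt hLp), Real.log_rpow hv0, Real.log_rpow hL0]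
  have hlogb : Real.log b =
      Real.log C + (-p * Real.log v + -(p*α) * Real.log (Real.log v)) := by
    rw [hbdef, Real.log_mul (ne_of_gt hCpos) (ne_of_gt (mul_pos hvp hLp)),
      Real.log_mul (ne_of_gt hvp) (ne_of_gt hLp), Real.log_rpow hv0, Real.log_rpow hL0]
  have hlogLL : 0 ≤ Real.log (Real.log v) := Real.log_nonneg hL1
  have hKL : -(p*|α|) * Real.log (Real.log v) ≤ p * α * Real.log (Real.log v) := by
    have hsum : 0 ≤ α + |α| := by linarith [neg_abs_le α]
    nlinarith [mul_nonneg (mul_nonneg hp0.le hsum) hlogLL]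
  have hlog3p : 0 ≤ Real.log (3*p) := Real.log_nonneg (by linarith)
  have hlog2 : 0 < Real.log 2 := Real.log_pos one_lt_two
  have hK3p : 0 ≤ p * |α| * Real.log (3*p) := by positivity
  have ha1 : a ≤ 1 := by
    have hla : Real.log a ≤ 0 := by
      rw [hloga, hlogc]
      nlinarith [hKL, h2, hL1, hlog2, hK3p]
    exact (Real.log_nonpos_iff hapos.le).mp hla
  -- the set identification
  have hmain : {w | v < |psiPA p α w|} ∩ Set.Icc (0:ℝ) 1
      = {u ∈ Set.Ioc (0:ℝ) 1 | v < psiPA p α u} := by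
    ext u
    simp only [Set.mem_inter_iff, Set.mem_setOf_eq, Set.mem_sep_iff]
    constructor
    · rintro ⟨habs, hIcc⟩
      have hu : u ∈ Set.Ioc (0:ℝ) 1 := by
        by_contra hn
        rw [psiPA] at habs
        simp only [if_neg hn, abs_zero] at habs
        linarith
      refine ⟨hu, ?_⟩
      rwa [abs_of_pos (psiPA_pos hu)] at habs
    · rintro ⟨hu, hlt⟩
      exact ⟨lt_of_lt_of_le hlt (le_abs_self _), Set.Ioc_subset_Icc_self hu⟩
  have hdis : distrib muI (psiPA p α) v
      = volume {u ∈ Set.Ioc (0:ℝ) 1 | v < psiPA p α u} := by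
    rw [distrib, muI, Measure.restrict_apply' measurableSet_Icc, hmain]
  have hsub1 : Set.Ioc (0:ℝ) a ⊆ {u ∈ Set.Ioc (0:ℝ) 1 | v < psiPA p α u} := by
    rintro u ⟨hu0, hua⟩
    have hu1 : u ∈ Set.Ioc (0:ℝ) 1 := ⟨hu0, le_trans hua ha1⟩
    refine ⟨hu1, ?_⟩
    rw [psiPA_gt_iff hp0 hv0 hu1]
    have hlogu : Real.log u ≤ Real.log a := Real.log_le_log hu0 hua
    rw [hloga] at hlogu
    have hs' : p * Real.log v + p * α * Real.log (Real.log v) - Real.log c ≤ -Real.log u := by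
      linarith
    have hlast := lower_s hp hL1 h2 h3 (le_of_eq hlogc) hs'
    rw [sub_eq_add_neg (1:ℝ)]
    linarith
  have hsub2 : {u ∈ Set.Ioc (0:ℝ) 1 | v < psiPA p α u} ⊆ Set.Ioc (0:ℝ) b := by
    rintro u ⟨hu1, hlt⟩
    refine ⟨hu1.1, ?_⟩
    rw [psiPA_gt_iff hp0 hv0 hu1, sub_eq_add_neg (1:ℝ)] at hlt
    have hs0 : (0:ℝ) ≤ -Real.log u := by
      have := Real.log_nonpos hu1.1.le hu1.2; linarith
    have hup := upper_s hp hL1 hs0 (ge_of_eq hlogC) hlt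
    rw [← Real.log_le_log_iff hu1.1 hbpos, hlogb]
    linarith
  constructor
  · rw [hdis]
    calc ENNReal.ofReal a = volume (Set.Ioc (0:ℝ) a) := by rw [Real.volume_Ioc, sub_zero]
      _ ≤ _ := measure_mono hsub1
  · rw [hdis]
    calc volume {u ∈ Set.Ioc (0:ℝ) 1 | v < psiPA p α u}
        ≤ volume (Set.Ioc (0:ℝ) b) := measure_mono hsub2
      _ = ENNReal.ofReal b := by rw [Real.volume_Ioc, sub_zero]
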